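/- arXiv:0802.4281 — 2 statements merged into one kernel-verified Lean document; each statement's English description precedes it below -/
import Mathlib

section
/- With E(t) = −[(e^{−2t}−3)² − (e^{2t}−3)²]/[(e^{2t}−3)² + (e^{−2t}−3)²] · (1 − 12e^{2t}/(1+e^{2t})²), the function K(s) = −∫₀^s E(t) dt equals (1/2)·ln[ 8e^{2s}((1−3e^{2s})² + e^{4s}(e^{2s}−3)²) / (e^{2s}+1)⁶ ] for all s ∈ ℝ. -/
open Real

noncomputable def Efun : ℝ → ℝ := fun t =>
  -(((Real.exp (-(2 * t)) - 3)^2 - (Real.exp (2 * t) - 3)^2) /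
    ((Real.exp (2 * t) - 3)^2 + (Real.exp (-(2 * t)) - 3)^2)) *
    (1 - 12 * Real.exp (2 * t) / (1 + Real.exp (2 * t))^2)

noncomputable def Ffun : ℝ → ℝ := fun s =>
  (1/2) * Real.log (8 * Real.exp (2 * s) *
    ((1 - 3 * Real.exp (2 * s))^2 + Real.exp (4 * s) * (Real.exp (2 * s) - 3)^2) /
    (Real.exp (2 * s) + 1)^6)

lemma h2exp (t : ℝ) : HasDerivAt (fun t => Real.exp (2*t)) (2 * Real.exp (2*t)) t := by
  have h := ((hasDerivAt_id t).const_mul (2:ℝ)).exp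
  simpa [mul_comm] using h

lemma h4exp (t : ℝ) : HasDerivAt (fun t => Real.exp (4*t)) (4 * Real.exp (4*t)) t := by
  have h := ((hasDerivAt_id t).const_mul (4:ℝ)).exp
  simpa [mul_comm] using h

lemma Ppos (x : ℝ) (hx : 0 < x) : 0 < (1 - 3*x)^2 + x^2*(x-3)^2 := by
  nlinarith [sq_nonneg (1-3*x), sq_nonneg (x-3), sq_nonneg x, sq_nonneg (x*(x-3)),
    sq_nonneg (x-1), sq_nonneg (x*(x-3)+(1-3*x))]

lemma key (t : ℝ) : HasDerivAt Ffun (-(Efun t)) t := by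
  have h2 := h2exp t
  have h4 := h4exp t
  have hxpos : 0 < Real.exp (2*t) := Real.exp_pos _
  set x := Real.exp (2*t) with hxdef
  have hy : Real.exp (4*t) = x^2 := by
    rw [hxdef, show (4:ℝ)*t = 2*t + 2*t by ring, Real.exp_add, sq]
  have hPpos : 0 < (1 - 3*x)^2 + x^2*(x-3)^2 := Ppos x hxpos
  have hP2 : 0 < (1 - 3*x)^2 + Real.exp (4*t)*(x-3)^2 := by rw [hy]; exact hPpos
  have hDpos : 0 < (x+1)^6 := by positivity
  have hNpos : 0 < 8 * x * ((1 - 3*x)^2 + Real.exp (4*t)*(x-3)^2) := by positivity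
  have hA : HasDerivAt (fun t => (1 - 3*Real.exp (2*t))^2)
      (2 * (1 - 3*x)^(2-1) * (-(3 * (2*x)))) t := ((h2.const_mul 3).const_sub 1).pow 2
  have hB : HasDerivAt (fun t => Real.exp (4*t) * (Real.exp (2*t) - 3)^2)
      (4 * Real.exp (4*t) * (x-3)^2 + Real.exp (4*t) * (2 * (x-3)^(2-1) * (2*x))) t :=
    h4.mul ((h2.sub_const 3).pow 2)
  have hN := (h2.const_mul 8).mul (hA.add hB)
  have hD : HasDerivAt (fun t => (Real.exp (2*t) + 1)^6)
      (6 * (x+1)^(6-1) * (2*x)) t := (h2.add_const 1).pow 6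
  have hG := hN.div hD (ne_of_gt hDpos)
  have hGpos : 0 < (fun t => 8 * Real.exp (2*t) * ((1 - 3*Real.exp (2*t))^2 +
      Real.exp (4*t) * (Real.exp (2*t) - 3)^2)) t / (fun t => (Real.exp (2*t) + 1)^6) t := by
    exact div_pos hNpos hDpos
  have hlog := hG.log (ne_of_gt hGpos)
  have hfinal := hlog.const_mul (1/2 : ℝ)
  refine hfinal.congr_deriv (Eq.symm ?_)
  · -- derivative equality
    simp only [Efun]
    rw [Real.exp_neg, hy, ← hxdef]
    have hB0 : (x-3)^2 + (x⁻¹-3)^2 ≠ 0 := by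
      have : 0 < (x-3)^2 + (x⁻¹-3)^2 := by
        rcases eq_or_ne x 3 with h | h
        · have : x⁻¹ - 3 ≠ 0 := by rw [h]; norm_num
          nlinarith [sq_nonneg (x-3), (pow_pos (abs_pos.mpr this) 2), sq_abs (x⁻¹-3)]
        · have hx3 : x - 3 ≠ 0 := sub_ne_zero.mpr h
          nlinarith [sq_nonneg (x⁻¹-3), pow_pos (abs_pos.mpr hx3) 2, sq_abs (x-3)]
      exact ne_of_gt this
    have h1x : (1+x) ≠ 0 := by positivity
    have hx1 : (x+1) ≠ 0 := by positivity
    have hq : (1 - x * 4 + x ^ 2 * 7 + x ^ 3 * 24 + (x ^ 4 * 7 - x ^ 5 * 4) + x ^ 6) ≠ 0 := by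
      have hq2 : (1 - x * 4 + x ^ 2 * 7 + x ^ 3 * 24 + (x ^ 4 * 7 - x ^ 5 * 4) + x ^ 6)
          = ((1 - 3*x)^2 + x^2*(x-3)^2) * (1+x)^2 := by ring
      rw [hq2]
      exact ne_of_gt (by positivity)
    simp only [Pi.mul_apply, Pi.add_apply, Pi.div_apply]
    rw [← hxdef, hy]
    have hx0 : x ≠ 0 := ne_of_gt hxpos
    have hP0 : (1 - 3*x)^2 + x^2*(x-3)^2 ≠ 0 := ne_of_gt hPpos
    field_simp
    ring

lemma Bpos (t : ℝ) : 0 < (Real.exp (2*t) - 3)^2 + (Real.exp (-(2*t)) - 3)^2 := by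
  rcases eq_or_ne (Real.exp (2*t)) 3 with h | h
  · have hne : Real.exp (-(2*t)) - 3 ≠ 0 := by
      rw [Real.exp_neg, h]; norm_num
    have h2 : 0 < (Real.exp (-(2*t)) - 3)^2 :=
      lt_of_le_of_ne (sq_nonneg _) (Ne.symm (pow_ne_zero 2 hne))
    nlinarith [sq_nonneg (Real.exp (2*t) - 3)]
  · have hne : Real.exp (2*t) - 3 ≠ 0 := sub_ne_zero.mpr h
    have h2 : 0 < (Real.exp (2*t) - 3)^2 :=
      lt_of_le_of_ne (sq_nonneg _) (Ne.symm (pow_ne_zero 2 hne))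
    nlinarith [sq_nonneg (Real.exp (-(2*t)) - 3)]

lemma Econt : Continuous Efun := by
  unfold Efun
  apply Continuous.mul
  · apply Continuous.neg
    exact Continuous.div (by fun_prop) (by fun_prop) (fun t => ne_of_gt (Bpos t))
  · exact Continuous.sub continuous_const
      (Continuous.div (by fun_prop) (by fun_prop)
        (fun t => by positivity))

theorem stmt5' :
    ∀ s : ℝ,
      -(∫ t in (0:ℝ)..s, Efun t) =
        (1/2) * Real.log (8 * Real.exp (2 * s) *
          ((1 - 3 * Real.exp (2 * s))^2 + Real.exp (4 * s) * (Real.exp (2 * s) - 3)^2) /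
          (Real.exp (2 * s) + 1)^6) := by
  intro s
  have h := intervalIntegral.integral_eq_sub_of_hasDerivAt
    (f := Ffun) (f' := fun t => -(Efun t)) (a := 0) (b := s)
    (fun t _ => key t) ((Econt.neg).intervalIntegrable 0 s)
  have h0 : Ffun 0 = 0 := by
    simp only [Ffun, mul_zero, Real.exp_zero]
    norm_num
  calc -(∫ t in (0:ℝ)..s, Efun t) = ∫ t in (0:ℝ)..s, -(Efun t) := by
        rw [intervalIntegral.integral_neg]
    _ = Ffun s - Ffun 0 := h
    _ = Ffun s := by rw [h0, sub_zero]



/-- K(s) = −∫₀^s E(t) dt has the closed form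
(1/2)·ln[8e^{2s}((1−3e^{2s})² + e^{4s}(e^{2s}−3)²)/(e^{2s}+1)⁶]. -/
theorem stmt5 :
    let E : ℝ → ℝ := fun t =>
      -(((Real.exp (-(2 * t)) - 3)^2 - (Real.exp (2 * t) - 3)^2) /
        ((Real.exp (2 * t) - 3)^2 + (Real.exp (-(2 * t)) - 3)^2)) *
        (1 - 12 * Real.exp (2 * t) / (1 + Real.exp (2 * t))^2)
    ∀ s : ℝ,
      -(∫ t in (0:ℝ)..s, E t) =
        (1/2) * Real.log (8 * Real.exp (2 * s) *
          ((1 - 3 * Real.exp (2 * s))^2 + Real.exp (4 * s) * (Real.exp (2 * s) - 3)^2) /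
          (Real.exp (2 * s) + 1)^6) := by
  intro E s
  exact stmt5' s
end

section
/- ∫_{−∞}^{∞} (u(s)+v(s))·(a(s)+b(s))²·(b(s)−a(s))·e^{K(s)} ds = 16/15, where a(s) = 2√2 e^{3s}/(1+e^{2s})², b(s) = 2√2 e^{s}/(1+e^{2s})², u(s) = −(e^{2s}−3)/√((e^{2s}−3)²+(e^{−2s}−3)²), v(s) = (e^{−2s}−3)/√((e^{2s}−3)²+(e^{−2s}−3)²), and e^{K(s)} = √(8e^{2s}((1−3e^{2s})² + e^{4s}(e^{2s}−3)²))/(e^{2s}+1)³. -/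
open MeasureTheory Set Filter

/-- The simplified integrand. -/
noncomputable def melF : ℝ → ℝ := fun s =>
  64 * Real.exp (2*s)^2 * (1 - Real.exp (2*s))^2 / (1 + Real.exp (2*s))^6

/-- An antiderivative of `melF`. -/
noncomputable def melG : ℝ → ℝ := fun s =>
  (-240 * Real.exp (2*s)^3 + 80 * Real.exp (2*s)^2 - 80 * Real.exp (2*s) - 16) /
    (15 * (1 + Real.exp (2*s))^5)

lemma mel_sqrt_pos (E : ℝ) : 0 < (E^2 - 3)^2 + ((E^2)⁻¹ - 3)^2 := by
  rcases eq_or_ne (E^2) 3 with h | h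
  · have h2 : ((E^2)⁻¹ - 3) ≠ 0 := by rw [h]; norm_num
    have := sq_nonneg (E^2 - 3)
    have h3 : 0 < ((E^2)⁻¹ - 3)^2 := by positivity
    linarith
  · have h2 : E^2 - 3 ≠ 0 := sub_ne_zero.mpr h
    have h3 : 0 < (E^2 - 3)^2 := by positivity
    have := sq_nonneg ((E^2)⁻¹ - 3)
    linarith

lemma mel_alg (c E R : ℝ) (hc : c^2 = 2) (hE : 0 < E) (hR : R ≠ 0) :
    ((-(E^2-3) + ((E^2)⁻¹-3))/R) * (8*(E^3+E)^2/(1+E^2)^4) *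
      ((2*c*E-2*c*E^3)/(1+E^2)^2) * (2*c*E^3*R/(E^2+1)^3) =
    64*E^4*(1-E^2)^2/(1+E^2)^6 := by
  have h1 : (1:ℝ)+E^2 ≠ 0 := by positivity
  field_simp
  ring_nf
  simp only [hc]
  ring

/-- Pointwise identity between the Melnikov integrand and `melF`. -/
lemma mel_point (s : ℝ) :
    (-(Real.exp (2 * s) - 3) /
        Real.sqrt ((Real.exp (2 * s) - 3)^2 + (Real.exp (-(2 * s)) - 3)^2) +
      (Real.exp (-(2 * s)) - 3) /
        Real.sqrt ((Real.exp (2 * s) - 3)^2 + (Real.exp (-(2 * s)) - 3)^2)) *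
      (2 * Real.sqrt 2 * Real.exp (3 * s) / (1 + Real.exp (2 * s))^2 +
        2 * Real.sqrt 2 * Real.exp s / (1 + Real.exp (2 * s))^2)^2 *
      (2 * Real.sqrt 2 * Real.exp s / (1 + Real.exp (2 * s))^2 -
        2 * Real.sqrt 2 * Real.exp (3 * s) / (1 + Real.exp (2 * s))^2) *
      (Real.sqrt (8 * Real.exp (2 * s) *
          ((1 - 3 * Real.exp (2 * s))^2 + Real.exp (4 * s) * (Real.exp (2 * s) - 3)^2)) /
        (Real.exp (2 * s) + 1)^3) = melF s := by
  obtain ⟨E, hEdef⟩ : ∃ E, Real.exp s = E := ⟨_, rfl⟩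
  have hE : 0 < E := hEdef ▸ Real.exp_pos s
  have h2 : Real.exp (2*s) = E^2 := by
    rw [show (2:ℝ)*s = s + s by ring, Real.exp_add, hEdef]; ring
  have h3 : Real.exp (3*s) = E^3 := by
    rw [show (3:ℝ)*s = s + (s + s) by ring, Real.exp_add, Real.exp_add, hEdef]; ring
  have h4 : Real.exp (4*s) = E^4 := by
    rw [show (4:ℝ)*s = s + (s + (s + s)) by ring, Real.exp_add, Real.exp_add,
      Real.exp_add, hEdef]; ring
  have hneg : Real.exp (-(2*s)) = (E^2)⁻¹ := by rw [Real.exp_neg, h2]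
  have hc : Real.sqrt 2 ^ 2 = 2 := Real.sq_sqrt (by norm_num)
  have hSpos : 0 < (E^2 - 3)^2 + ((E^2)⁻¹ - 3)^2 := mel_sqrt_pos E
  have hfac : 8*E^2*((1-3*E^2)^2 + E^4*(E^2-3)^2) =
      (2*Real.sqrt 2*E^3)^2 * ((E^2 - 3)^2 + ((E^2)⁻¹ - 3)^2) := by
    field_simp
    ring_nf
    simp only [hc]
    ring
  have hsq : Real.sqrt (8*E^2*((1-3*E^2)^2 + E^4*(E^2-3)^2)) =
      2*Real.sqrt 2*E^3*Real.sqrt ((E^2 - 3)^2 + ((E^2)⁻¹ - 3)^2) := by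
    rw [hfac, Real.sqrt_mul (by positivity), Real.sqrt_sq (by positivity)]
  have hRpos : 0 < Real.sqrt ((E^2 - 3)^2 + ((E^2)⁻¹ - 3)^2) := Real.sqrt_pos.mpr hSpos
  rw [melF, h2, h3, h4, hneg, hEdef, hsq]
  have hstep1 : (2 * Real.sqrt 2 * E^3 / (1 + E^2)^2 + 2 * Real.sqrt 2 * E / (1 + E^2)^2)^2 =
      8*(E^3+E)^2/(1+E^2)^4 := by
    rw [← add_div, div_pow]
    congr 1
    · linear_combination (4*(E^3+E)^2) * hc
    · ring
  have hstep2 : (2 * Real.sqrt 2 * E / (1 + E^2)^2 - 2 * Real.sqrt 2 * E^3 / (1 + E^2)^2) =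
      (2*Real.sqrt 2*E - 2*Real.sqrt 2*E^3)/(1+E^2)^2 := (div_sub_div_same _ _ _)
  have hstep0 : -(E ^ 2 - 3) /
        Real.sqrt ((E ^ 2 - 3) ^ 2 + ((E ^ 2)⁻¹ - 3) ^ 2) +
      ((E ^ 2)⁻¹ - 3) / Real.sqrt ((E ^ 2 - 3) ^ 2 + ((E ^ 2)⁻¹ - 3) ^ 2) =
      (-(E^2-3) + ((E^2)⁻¹-3)) / Real.sqrt ((E ^ 2 - 3) ^ 2 + ((E ^ 2)⁻¹ - 3) ^ 2) :=
    (add_div _ _ _).symm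
  rw [hstep0, hstep1, hstep2]
  have halg := mel_alg (Real.sqrt 2) E
    (Real.sqrt ((E ^ 2 - 3) ^ 2 + ((E ^ 2)⁻¹ - 3) ^ 2)) hc hE hRpos.ne'
  rw [halg]
  ring

/-- `melG` has derivative `melF`. -/
lemma mel_hasDerivAt (s : ℝ) : HasDerivAt melG (melF s) s := by
  have htpos : 0 < Real.exp (2*s) := Real.exp_pos _
  have ht : HasDerivAt (fun s : ℝ => Real.exp (2*s)) (2*Real.exp (2*s)) s := by
    simpa [mul_comm] using ((hasDerivAt_id s).const_mul 2).exp
  have hnum : HasDerivAt (fun x : ℝ => -240*x^3 + 80*x^2 - 80*x - 16)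
      (-720*Real.exp (2*s)^2 + 160*Real.exp (2*s) - 80) (Real.exp (2*s)) := by
    have h := ((((hasDerivAt_pow 3 (Real.exp (2*s))).const_mul (-240:ℝ)).add
      ((hasDerivAt_pow 2 (Real.exp (2*s))).const_mul (80:ℝ))).sub
      ((hasDerivAt_id (Real.exp (2*s))).const_mul (80:ℝ))).sub_const 16
    refine h.congr_deriv ?_
    push_cast
    ring
  have hden : HasDerivAt (fun x : ℝ => 15*(1+x)^5) (75*(1+Real.exp (2*s))^4)
      (Real.exp (2*s)) := by
    have h := (((hasDerivAt_id (Real.exp (2*s))).const_add 1).pow 5).const_mul (15:ℝ)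
    refine h.congr_deriv ?_
    push_cast
    simp only [id_eq]
    ring
  have hdenne : 15*(1+Real.exp (2*s))^5 ≠ 0 := by positivity
  have h := (hnum.comp s ht).div (hden.comp s ht) (by simpa using hdenne)
  refine h.congr_deriv (Eq.symm ?_)
  show melF s = _
  rw [melF]
  simp only [Function.comp_apply]
  field_simp
  ring

lemma mel_tendsto_atBot : Tendsto melG atBot (nhds (-16/15)) := by
  have h2 : Tendsto (fun s : ℝ => 2*s) atBot atBot :=
    Tendsto.const_mul_atBot two_pos tendsto_id
  have h0 : Tendsto (fun s : ℝ => Real.exp (2*s)) atBot (nhds 0) :=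
    Real.tendsto_exp_atBot.comp h2
  have hcont : ContinuousAt (fun x : ℝ => (-240*x^3 + 80*x^2 - 80*x - 16)/(15*(1+x)^5)) 0 := by
    apply ContinuousAt.div
    · fun_prop
    · fun_prop
    · norm_num
  have := hcont.tendsto.comp h0
  simp only [Function.comp_def] at this
  convert this using 2
  · rw [melG]
  norm_num

lemma mel_tendsto_atTop : Tendsto melG atTop (nhds 0) := by
  have h2 : Tendsto (fun s : ℝ => 2*s) atTop atTop :=
    Tendsto.const_mul_atTop two_pos tendsto_id
  have h0 : Tendsto (fun s : ℝ => (Real.exp (2*s))⁻¹) atTop (nhds 0) :=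
    (Real.tendsto_exp_atTop.comp h2).inv_tendsto_atTop
  have hcont : ContinuousAt
      (fun r : ℝ => (-240*r^2 + 80*r^3 - 80*r^4 - 16*r^5)/(15*(1+r)^5)) 0 := by
    apply ContinuousAt.div
    · fun_prop
    · fun_prop
    · norm_num
  have key : ∀ s : ℝ, melG s =
      (fun r : ℝ => (-240*r^2 + 80*r^3 - 80*r^4 - 16*r^5)/(15*(1+r)^5))
        ((Real.exp (2*s))⁻¹) := by
    intro s
    have htpos : 0 < Real.exp (2*s) := Real.exp_pos _
    have h1t : (1:ℝ) + Real.exp (2*s) ≠ 0 := by positivity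
    have h1t' : (1:ℝ) + (Real.exp (2*s))⁻¹ ≠ 0 := by positivity
    rw [melG]
    field_simp
    ring
  have := hcont.tendsto.comp h0
  simp only [Function.comp_def] at this
  have h00 : ((-240*(0:ℝ)^2 + 80*0^3 - 80*0^4 - 16*0^5)/(15*(1+0)^5)) = 0 := by norm_num
  rw [show (0:ℝ) = ((-240*(0:ℝ)^2 + 80*0^3 - 80*0^4 - 16*0^5)/(15*(1+0)^5)) from h00.symm]
  exact Tendsto.congr (fun s => (key s).symm) this

lemma mel_continuous : Continuous melF := by
  apply Continuous.div
  · fun_prop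
  · fun_prop
  · intro x
    positivity

lemma mel_sq_exp (s : ℝ) : Real.exp (2*s)^2 = Real.exp (4*s) := by
  rw [pow_two, ← Real.exp_add]
  congr 1
  ring

lemma mel_integrable : Integrable melF := by
  rw [← integrableOn_univ, ← Set.Iic_union_Ioi (a := (0:ℝ))]
  apply IntegrableOn.union
  · apply Integrable.mono' ((integrableOn_exp_Iic 0).const_mul 64)
      mel_continuous.aestronglyMeasurable.restrict
    rw [ae_restrict_iff' measurableSet_Iic]
    refine ae_of_all _ fun s hs => ?_
    have hs : s ≤ 0 := hs
    have htpos : 0 < Real.exp (2*s) := Real.exp_pos _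
    have hnn : 0 ≤ melF s := by rw [melF]; positivity
    rw [Real.norm_of_nonneg hnn, melF]
    have key : ∀ t : ℝ, 0 < t → 64 * t^2 * (1-t)^2 / (1+t)^6 ≤ 64 * t^2 := by
      intro t ht
      rw [div_le_iff₀ (by positivity)]
      have hA : (1-t)^2 ≤ (1+t)^2 := by nlinarith
      have hB : (1+t)^2 ≤ (1+t)^6 := pow_le_pow_right₀ (by linarith) (by norm_num)
      nlinarith [mul_le_mul_of_nonneg_left (hA.trans hB)
        (show (0:ℝ) ≤ 64*t^2 by positivity)]
    have hle : Real.exp (4*s) ≤ Real.exp s := Real.exp_le_exp.mpr (by linarith)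
    calc 64 * Real.exp (2*s)^2 * (1 - Real.exp (2*s))^2 / (1 + Real.exp (2*s))^6
        ≤ 64 * Real.exp (2*s)^2 := key _ htpos
      _ = 64 * Real.exp (4*s) := by rw [mel_sq_exp]
      _ ≤ 64 * Real.exp s := by linarith
  · apply Integrable.mono'
      ((exp_neg_integrableOn_Ioi 0 (by norm_num : (0:ℝ) < 4)).const_mul 64)
      mel_continuous.aestronglyMeasurable.restrict
    rw [ae_restrict_iff' measurableSet_Ioi]
    refine ae_of_all _ fun s _ => ?_
    have htpos : 0 < Real.exp (2*s) := Real.exp_pos _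
    have hnn : 0 ≤ melF s := by rw [melF]; positivity
    rw [Real.norm_of_nonneg hnn, melF]
    have key : ∀ t : ℝ, 0 < t → 64 * t^2 * (1-t)^2 / (1+t)^6 ≤ 64 / t^2 := by
      intro t ht
      rw [div_le_div_iff₀ (by positivity) (by positivity)]
      have hA : (1-t)^2 ≤ (1+t)^2 := by nlinarith
      have hC : t^4 ≤ (1+t)^4 := pow_le_pow_left₀ ht.le (by linarith) 4
      nlinarith [mul_le_mul hC hA (sq_nonneg _) (by positivity : (0:ℝ) ≤ (1+t)^4)]
    have hhh : 64 * Real.exp (-4*s) = 64 / Real.exp (2*s)^2 := by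
      rw [mel_sq_exp, show (-4:ℝ)*s = -(4*s) by ring, Real.exp_neg, div_eq_mul_inv]
    rw [hhh]
    exact key _ htpos

/-- The Melnikov damping coefficient:
∫ℝ (u+v)(a+b)²(b−a)e^{K} ds = 16/15, with all functions explicit. -/
theorem stmt14 :
    let a : ℝ → ℝ := fun s => 2 * Real.sqrt 2 * Real.exp (3 * s) / (1 + Real.exp (2 * s))^2
    let b : ℝ → ℝ := fun s => 2 * Real.sqrt 2 * Real.exp s / (1 + Real.exp (2 * s))^2
    let u : ℝ → ℝ := fun s => -(Real.exp (2 * s) - 3) /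
      Real.sqrt ((Real.exp (2 * s) - 3)^2 + (Real.exp (-(2 * s)) - 3)^2)
    let v : ℝ → ℝ := fun s => (Real.exp (-(2 * s)) - 3) /
      Real.sqrt ((Real.exp (2 * s) - 3)^2 + (Real.exp (-(2 * s)) - 3)^2)
    let eK : ℝ → ℝ := fun s =>
      Real.sqrt (8 * Real.exp (2 * s) *
        ((1 - 3 * Real.exp (2 * s))^2 + Real.exp (4 * s) * (Real.exp (2 * s) - 3)^2)) /
        (Real.exp (2 * s) + 1)^3
    ∫ s : ℝ, (u s + v s) * (a s + b s)^2 * (b s - a s) * eK s = 16/15 := by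
  intro a b u v eK
  have hpt : ∀ s : ℝ, (u s + v s) * (a s + b s)^2 * (b s - a s) * eK s = melF s :=
    fun s => mel_point s
  calc ∫ s : ℝ, (u s + v s) * (a s + b s)^2 * (b s - a s) * eK s
      = ∫ s : ℝ, melF s := integral_congr_ae (Filter.Eventually.of_forall hpt)
    _ = 0 - (-16/15) :=
        integral_of_hasDerivAt_of_tendsto mel_hasDerivAt mel_integrable
          mel_tendsto_atBot mel_tendsto_atTop
    _ = 16/15 := by norm_num
end
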